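/- Let W : ℝ^{2×2} → [0,∞) be continuous, three times continuously differentiable on a neighborhood of SO(2), frame indifferent (W(RF) = W(F) for all R ∈ SO(2) and F ∈ ℝ^{2×2}), and satisfy W(F) = 0 if and only if F ∈ SO(2). Then there exist δ ∈ (0,1] and C > 0 such that for every F ∈ ℝ^{2×2} with ‖F‖ ≤ δ one has |W(Id + F) − (1/2) D²W(Id)[sym F, sym F]| ≤ C‖F‖³. -/

import Mathlib

open Matrix

attribute [local instance] Matrix.normedAddCommGroup Matrix.normedSpace

/-- The Frobenius norm of a real 2×2 matrix. -/
noncomputable def frobNorm (A : Matrix (Fin 2) (Fin 2) ℝ) : ℝ :=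
  Real.sqrt (∑ i : Fin 2, ∑ j : Fin 2, (A i j) ^ 2)

/-- The symmetric part of a 2×2 matrix. -/
noncomputable def symPart (F : Matrix (Fin 2) (Fin 2) ℝ) : Matrix (Fin 2) (Fin 2) ℝ :=
  (1 / 2 : ℝ) • (F + Fᵀ)

/-- The quadratic form `Q(F) = D²W(Id)[F,F]` associated to the Hessian of `W` at the
identity matrix. -/
noncomputable def hessQ (W : Matrix (Fin 2) (Fin 2) ℝ → ℝ)
    (F : Matrix (Fin 2) (Fin 2) ℝ) : ℝ :=
  fderiv ℝ (fderiv ℝ W) 1 F F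

local notation "E2" => Matrix (Fin 2) (Fin 2) ℝ

/-- The topology of `E2` coming from its normed group structure. -/
@[reducible] noncomputable def E2top : TopologicalSpace E2 :=
  @UniformSpace.toTopologicalSpace E2 (@PseudoMetricSpace.toUniformSpace E2
    (@SeminormedAddCommGroup.toPseudoMetricSpace E2
      (@NormedAddCommGroup.toSeminormedAddCommGroup E2 Matrix.normedAddCommGroup)))

section

attribute [local instance] E2top


lemma frobNorm_nonneg (F : E2) : 0 ≤ frobNorm F := Real.sqrt_nonneg _

lemma norm_le_frobNorm (F : E2) : ‖F‖ ≤ frobNorm F := by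
  rw [Matrix.norm_le_iff (frobNorm_nonneg F)]
  intro i j
  rw [Real.norm_eq_abs, frobNorm, ← Real.sqrt_sq_eq_abs (F i j)]
  apply Real.sqrt_le_sqrt
  calc (F i j)^2 ≤ ∑ j' : Fin 2, (F i j')^2 :=
        Finset.single_le_sum (f := fun j' => (F i j')^2) (fun _ _ => sq_nonneg _) (Finset.mem_univ j)
    _ ≤ ∑ i' : Fin 2, ∑ j' : Fin 2, (F i' j')^2 :=
        Finset.single_le_sum (f := fun i' => ∑ j' : Fin 2, (F i' j')^2)
          (fun _ _ => Finset.sum_nonneg fun _ _ => sq_nonneg _) (Finset.mem_univ i)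

/-- The rotation generator. -/
def Jmat : Matrix (Fin 2) (Fin 2) ℝ := !![0, -1; 1, 0]

noncomputable def Rot (θ : ℝ) : Matrix (Fin 2) (Fin 2) ℝ :=
  Real.cos θ • (1 : Matrix (Fin 2) (Fin 2) ℝ) + Real.sin θ • Jmat

lemma Rot_eq (θ : ℝ) : Rot θ = !![Real.cos θ, -Real.sin θ; Real.sin θ, Real.cos θ] := by
  ext i j
  fin_cases i <;> fin_cases j <;>
    simp [Rot, Jmat, Matrix.one_apply] <;> ring

lemma Rot_mem_SO (θ : ℝ) : (Rot θ)ᵀ * Rot θ = 1 ∧ (Rot θ).det = 1 := by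
  constructor
  · rw [Rot_eq]
    ext i j
    fin_cases i <;> fin_cases j <;>
      simp [Matrix.mul_apply, Fin.sum_univ_two, Matrix.one_apply, Matrix.vecHead, Matrix.vecTail] <;>
        nlinarith [Real.sin_sq_add_cos_sq θ]
  · rw [Rot_eq, Matrix.det_fin_two_of]
    nlinarith [Real.sin_sq_add_cos_sq θ]

lemma sym_skew_decomp (F : E2) :
    F = symPart F + ((F 1 0 - F 0 1) / 2) • Jmat := by
  ext i j
  fin_cases i <;> fin_cases j <;>
    simp [symPart, Jmat, Matrix.transpose_apply] <;> ring


lemma hessQ_key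
    (W : E2 → ℝ) {U : Set E2} (hUopen : IsOpen U) (h1U : (1:E2) ∈ U)
    (hdiffW : ∀ x ∈ U, HasFDerivAt W (fderiv ℝ W x) x)
    (hB : HasFDerivAt (fderiv ℝ W) (fderiv ℝ (fderiv ℝ W) 1) 1)
    (hDW1 : fderiv ℝ W 1 = 0)
    (hframe : ∀ R F : E2, Rᵀ * R = 1 → R.det = 1 → W (R * F) = W F)
    (S : E2) (a : ℝ) :
    fderiv ℝ (fderiv ℝ W) 1 (S + a • Jmat) (S + a • Jmat)
      = fderiv ℝ (fderiv ℝ W) 1 S S := by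
  set B := fderiv ℝ (fderiv ℝ W) 1 with hBdef
  set c : ℝ → E2 := fun t => Real.cos (a*t) • (1:E2) + Real.sin (a*t) • Jmat
      + (t * Real.cos (a*t)) • S + (t * Real.sin (a*t)) • (Jmat * S) with hcdef
  set c' : ℝ → E2 := fun t => (-Real.sin (a*t) * a) • (1:E2) + (Real.cos (a*t) * a) • Jmat
      + (1 * Real.cos (a*t) + t * (-Real.sin (a*t) * a)) • S
      + (1 * Real.sin (a*t) + t * (Real.cos (a*t) * a)) • (Jmat * S) with hc'def
  have hc0 : c 0 = 1 := by simp [hcdef]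
  have hc'0 : c' 0 = S + a • Jmat := by
    simp [hc'def]
    abel
  have hat : ∀ t : ℝ, HasDerivAt (fun t => a*t) a t := fun t => by
    simpa using (hasDerivAt_id t).const_mul a
  have hcos : ∀ t : ℝ, HasDerivAt (fun t => Real.cos (a*t)) (-Real.sin (a*t) * a) t :=
    fun t => (hat t).cos
  have hsin : ∀ t : ℝ, HasDerivAt (fun t => Real.sin (a*t)) (Real.cos (a*t) * a) t :=
    fun t => (hat t).sin
  have hcderiv : ∀ t, HasDerivAt c (c' t) t := fun t => by
    exact (((hcos t).smul_const (1:E2)).add ((hsin t).smul_const Jmat)).add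
        (((hasDerivAt_id t).mul (hcos t)).smul_const S) |>.add
        (((hasDerivAt_id t).mul (hsin t)).smul_const (Jmat * S))
  have hc_eq : ∀ t, c t = Rot (a*t) * (1 + t • S) := by
    intro t
    simp only [hcdef, Rot, mul_add, add_mul, Matrix.smul_mul, Matrix.mul_smul,
      Matrix.one_mul, Matrix.mul_one, smul_smul]
    module
  have hccont : Continuous c := by
    rw [continuous_iff_continuousAt]; exact fun t => (hcderiv t).continuousAt
  have hlinecont : Continuous (fun t : ℝ => (1:E2) + t • S) := by continuity
  set T : Set ℝ := c ⁻¹' U ∩ (fun t : ℝ => (1:E2) + t • S) ⁻¹' U with hTdef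
  have hTopen : IsOpen T := (hUopen.preimage hccont).inter (hUopen.preimage hlinecont)
  have h0T : (0:ℝ) ∈ T := by
    constructor
    · simpa [hc0] using h1U
    · simpa using h1U
  have hline : ∀ t : ℝ, HasDerivAt (fun u : ℝ => (1:E2) + u • S) S t := fun t => by
    simpa using ((hasDerivAt_id t).smul_const S).const_add (1:E2)
  have hfun_eq : (fun u => W (c u)) = (fun u => W ((1:E2) + u • S)) := by
    funext u
    rw [hc_eq]
    exact hframe _ _ (Rot_mem_SO _).1 (Rot_mem_SO _).2
  have hφψ : ∀ t ∈ T, (fderiv ℝ W (c t)) (c' t) = (fderiv ℝ W ((1:E2) + t • S)) S := by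
    intro t ht
    have h1 : HasDerivAt (fun u => W (c u)) ((fderiv ℝ W (c t)) (c' t)) t :=
      (hdiffW _ ht.1).comp_hasDerivAt t (hcderiv t)
    have h2 : HasDerivAt (fun u => W ((1:E2) + u • S)) ((fderiv ℝ W ((1:E2) + t • S)) S) t :=
      (hdiffW _ ht.2).comp_hasDerivAt t (hline t)
    rw [hfun_eq] at h1
    exact h1.unique h2
  -- differentiability of c' at 0
  have hc'diff : DifferentiableAt ℝ c' 0 := by
    rw [hc'def]; fun_prop
  obtain ⟨v, hv⟩ : ∃ v, HasDerivAt c' v 0 := ⟨_, hc'diff.hasDerivAt⟩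
  -- second derivative of φ at 0
  have hA1 : HasDerivAt (fun t : ℝ => fderiv ℝ W (c t)) (B (c' 0)) 0 := by
    exact hB.comp_hasDerivAt_of_eq (0:ℝ) (hcderiv 0) hc0.symm
  have hD1 : HasDerivAt (fun t : ℝ => (fderiv ℝ W (c t)) (c' t))
      ((B (c' 0)) (c' 0) + (fderiv ℝ W (c 0)) v) 0 := hA1.clm_apply hv
  have hA2 : HasDerivAt (fun t : ℝ => fderiv ℝ W ((1:E2) + t • S)) (B S) 0 := by
    exact hB.comp_hasDerivAt_of_eq (0:ℝ) (hline 0) (by simp)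
  have hD2 : HasDerivAt (fun t : ℝ => (fderiv ℝ W ((1:E2) + t • S)) S)
      ((B S) S + (fderiv ℝ W ((1:E2) + (0:ℝ) • S)) 0) 0 :=
    hA2.clm_apply (hasDerivAt_const (0:ℝ) S)
  have heq : (fun t : ℝ => (fderiv ℝ W (c t)) (c' t))
      =ᶠ[nhds (0:ℝ)] (fun t : ℝ => (fderiv ℝ W ((1:E2) + t • S)) S) :=
    Filter.eventuallyEq_of_mem (hTopen.mem_nhds h0T) hφψ
  have hD1' : HasDerivAt (fun t : ℝ => (fderiv ℝ W ((1:E2) + t • S)) S)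
      ((B (c' 0)) (c' 0) + (fderiv ℝ W (c 0)) v) 0 :=
    hD1.congr_of_eventuallyEq heq.symm
  have := hD1'.unique hD2
  rw [hc0, hc'0, hDW1] at this
  simpa using this

/-- Taylor expansion -/
theorem W_taylor_expansion_aux
    (W : Matrix (Fin 2) (Fin 2) ℝ → ℝ)
    (hWcont : Continuous W) (hWnonneg : ∀ F, 0 ≤ W F)
    (U : Set (Matrix (Fin 2) (Fin 2) ℝ)) (hUopen : IsOpen U)
    (hUSO : {R : Matrix (Fin 2) (Fin 2) ℝ | Rᵀ * R = 1 ∧ R.det = 1} ⊆ U)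
    (hC3 : ContDiffOn ℝ 3 W U)
    (hframe : ∀ R F : Matrix (Fin 2) (Fin 2) ℝ, Rᵀ * R = 1 → R.det = 1 → W (R * F) = W F)
    (hzero : ∀ F : Matrix (Fin 2) (Fin 2) ℝ, W F = 0 ↔ (Fᵀ * F = 1 ∧ F.det = 1)) :
    ∃ δ : ℝ, 0 < δ ∧ δ ≤ 1 ∧ ∃ C : ℝ, 0 < C ∧
      ∀ F : Matrix (Fin 2) (Fin 2) ℝ, frobNorm F ≤ δ →
        |W (1 + F) - 1 / 2 * hessQ W (symPart F)| ≤ C * frobNorm F ^ 3 := by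
  classical
  have h1U : (1:E2) ∈ U := hUSO ⟨by simp, by simp⟩
  have hW1 : W 1 = 0 := (hzero 1).2 ⟨by simp, by simp⟩
  have hCA : ∀ x ∈ U, ContDiffAt ℝ 3 W x := fun x hx => hC3.contDiffAt (hUopen.mem_nhds hx)
  have hdiffW : ∀ x ∈ U, HasFDerivAt W (fderiv ℝ W x) x := fun x hx =>
    ((hCA x hx).differentiableAt (by norm_num)).hasFDerivAt
  have hf'CA : ∀ x ∈ U, ContDiffAt ℝ 2 (fderiv ℝ W) x := fun x hx =>
    (hCA x hx).fderiv_right (by norm_num)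
  have hdifff' : ∀ x ∈ U, HasFDerivAt (fderiv ℝ W) (fderiv ℝ (fderiv ℝ W) x) x := fun x hx =>
    ((hf'CA x hx).differentiableAt (by norm_num)).hasFDerivAt
  set B := fderiv ℝ (fderiv ℝ W) 1 with hBdef
  have hDW1 : fderiv ℝ W 1 = 0 := by
    have hmin : IsLocalMin W 1 :=
      Filter.Eventually.of_forall fun x => by rw [hW1]; exact hWnonneg x
    exact hmin.fderiv_eq_zero
  have hBsymm : ∀ v w, B v w = B w v := fun v w =>
    second_derivative_symmetric_of_eventually
      (Filter.eventually_of_mem (hUopen.mem_nhds h1U) fun y hy => hdiffW y hy)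
      (hdifff' 1 h1U) v w
  -- Lipschitz continuity of the second derivative near 1
  obtain ⟨K, t, htmem, hlip⟩ :
      ∃ K, ∃ t ∈ nhds (1:E2), LipschitzOnWith K (fderiv ℝ (fderiv ℝ W)) t :=
    (((hCA 1 h1U).fderiv_right (m := 2) (by norm_num)).fderiv_right (m := 1)
      (by norm_num)).exists_lipschitzOnWith
  obtain ⟨r, hr0, hrsub⟩ : ∃ r > 0, Metric.closedBall (1:E2) r ⊆ U ∩ t := by
    rcases Metric.mem_nhds_iff.1 (Filter.inter_mem (hUopen.mem_nhds h1U) htmem) with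
      ⟨ε, hε, hsub⟩
    exact ⟨ε/2, by positivity, (Metric.closedBall_subset_ball (by linarith)).trans hsub⟩
  -- derivative of affine map y ↦ B (y - 1)
  have haff : ∀ y : E2, HasFDerivAt (fun y : E2 => B (y - 1)) B y := by
    intro y
    have h2 : HasFDerivAt (fun y : E2 => y - 1) (ContinuousLinearMap.id ℝ E2) y :=
      (hasFDerivAt_id y).sub_const 1
    have := B.hasFDerivAt.comp y h2
    simpa only [Function.comp_def, ContinuousLinearMap.comp_id] using this
  -- Step A : first derivative expansion
  have stepA : ∀ ρ, ρ ≤ r → ∀ x ∈ Metric.closedBall (1:E2) ρ,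
      ‖fderiv ℝ W x - B (x - 1)‖ ≤ (K : ℝ) * ρ * ‖x - 1‖ := by
    intro ρ hρr x hx
    have hsub' : Metric.closedBall (1:E2) ρ ⊆ U ∩ t :=
      (Metric.closedBall_subset_closedBall hρr).trans hrsub
    have h1s : (1:E2) ∈ Metric.closedBall (1:E2) ρ := by
      have : (0:ℝ) ≤ ρ := le_trans (by positivity) (dist_nonneg.trans (Metric.mem_closedBall.1 hx))
      simpa using this
    have key := Convex.norm_image_sub_le_of_norm_hasFDerivWithin_le
      (f := fun y : E2 => fderiv ℝ W y - B (y - 1))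
      (f' := fun y : E2 => fderiv ℝ (fderiv ℝ W) y - B)
      (s := Metric.closedBall (1:E2) ρ) (C := (K:ℝ) * ρ)
      (fun y hy => ((hdifff' y (hsub' hy).1).sub (haff y)).hasFDerivWithinAt)
      (fun y hy => by
        have hd : dist (fderiv ℝ (fderiv ℝ W) y) (fderiv ℝ (fderiv ℝ W) 1)
            ≤ (K:ℝ) * dist y 1 := hlip.dist_le_mul y (hsub' hy).2 1 (hsub' h1s).2
        rw [dist_eq_norm] at hd
        calc ‖fderiv ℝ (fderiv ℝ W) y - B‖ ≤ (K:ℝ) * ‖y - 1‖ := by rw [hBdef, ← dist_eq_norm (fderiv ℝ (fderiv ℝ W) y)]; exact hd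
          _ ≤ (K:ℝ) * ρ := by
              have := Metric.mem_closedBall.1 hy
              rw [dist_eq_norm] at this
              exact mul_le_mul_of_nonneg_left this K.2)
      (convex_closedBall _ _) h1s hx
    simpa [hDW1] using key
  -- Step B : second order Taylor estimate
  have stepB : ∀ F : E2, ‖F‖ ≤ r →
      |W (1 + F) - 1/2 * (B F F)| ≤ (K:ℝ) * ‖F‖ * ‖F‖ * ‖F‖ := by
    intro F hF
    set g : E2 → ℝ := fun y => W y - (1/2 : ℝ) * (B (y - 1)) (y - 1) with hgdef
    have hgderiv : ∀ y ∈ U, HasFDerivAt g (fderiv ℝ W y - B (y - 1)) y := by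
      intro y hy
      have hq : HasFDerivAt (fun y : E2 => (B (y - 1)) (y - 1))
          ((B (y - 1)).comp (ContinuousLinearMap.id ℝ E2)
            + B.flip (y - 1)) y :=
        (haff y).clm_apply ((hasFDerivAt_id y).sub_const 1)
      have hhalf : HasFDerivAt (fun y : E2 => (1/2 : ℝ) * (B (y - 1)) (y - 1))
          ((1/2 : ℝ) • ((B (y - 1)).comp (ContinuousLinearMap.id ℝ E2) + B.flip (y - 1))) y :=
        hq.const_mul (1/2 : ℝ)
      have heq : (1/2 : ℝ) • ((B (y - 1)).comp (ContinuousLinearMap.id ℝ E2)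
          + B.flip (y - 1)) = B (y - 1) := by
        ext v
        simp [ContinuousLinearMap.flip_apply]
        rw [hBsymm v y, hBsymm v 1]
        ring
      rw [heq] at hhalf
      exact (hdiffW y hy).sub hhalf
    have hballU : Metric.closedBall (1:E2) ‖F‖ ⊆ U :=
      (Metric.closedBall_subset_closedBall hF).trans (hrsub.trans Set.inter_subset_left)
    have h1b : (1:E2) ∈ Metric.closedBall (1:E2) ‖F‖ := by simp
    have hFb : (1 + F : E2) ∈ Metric.closedBall (1:E2) ‖F‖ := by
      simp [Metric.mem_closedBall, dist_eq_norm]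
    have key := Convex.norm_image_sub_le_of_norm_hasFDerivWithin_le
      (f := g) (f' := fun y : E2 => fderiv ℝ W y - B (y - 1))
      (s := Metric.closedBall (1:E2) ‖F‖) (C := (K:ℝ) * ‖F‖ * ‖F‖)
      (fun y hy => (hgderiv y (hballU hy)).hasFDerivWithinAt)
      (fun y hy => by
        have := stepA ‖F‖ hF y hy
        calc ‖fderiv ℝ W y - B (y - 1)‖ ≤ (K:ℝ) * ‖F‖ * ‖y - 1‖ := this
          _ ≤ (K:ℝ) * ‖F‖ * ‖F‖ := by
              have h2 := Metric.mem_closedBall.1 hy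
              rw [dist_eq_norm] at h2
              have : (0:ℝ) ≤ (K:ℝ) * ‖F‖ := by positivity
              exact mul_le_mul_of_nonneg_left h2 this)
      (convex_closedBall _ _) h1b hFb
    have hg1 : g 1 = 0 := by simp [hgdef, hW1]
    have hgF : g (1 + F) = W (1 + F) - 1/2 * (B F F) := by simp [hgdef]; ring
    rw [hg1, sub_zero, hgF] at key
    calc |W (1 + F) - 1/2 * (B F F)| ≤ (K:ℝ) * ‖F‖ * ‖F‖ * ‖1 + F - 1‖ := key
      _ = (K:ℝ) * ‖F‖ * ‖F‖ * ‖F‖ := by norm_num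
  -- Frame indifference kills the skew part in the Hessian
  have hkey : ∀ F : E2, B F F = B (symPart F) (symPart F) := by
    intro F
    conv_lhs => rw [sym_skew_decomp F]
    exact hessQ_key W hUopen h1U hdiffW (hdifff' 1 h1U) hDW1 hframe (symPart F) _
  -- Conclusion
  refine ⟨min r 1, lt_min hr0 one_pos, min_le_right _ _, (K:ℝ) + 1, by positivity, ?_⟩
  intro F hFδ
  have hnF : ‖F‖ ≤ frobNorm F := norm_le_frobNorm F
  have hFr : ‖F‖ ≤ r := hnF.trans (hFδ.trans (min_le_left _ _))
  have hQ : hessQ W (symPart F) = B F F := by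
    calc hessQ W (symPart F) = B (symPart F) (symPart F) := rfl
      _ = B F F := (hkey F).symm
  rw [hQ]
  calc |W (1 + F) - 1/2 * (B F F)| ≤ (K:ℝ) * ‖F‖ * ‖F‖ * ‖F‖ := stepB F hFr
    _ = (K:ℝ) * ‖F‖^3 := by ring
    _ ≤ (K:ℝ) * frobNorm F ^ 3 := by
        have := pow_le_pow_left₀ (norm_nonneg F) hnF 3
        exact mul_le_mul_of_nonneg_left this K.2
    _ ≤ ((K:ℝ) + 1) * frobNorm F ^ 3 := by
        have h3 : (0:ℝ) ≤ frobNorm F ^ 3 := pow_nonneg (frobNorm_nonneg F) 3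
        nlinarith

end

theorem W_taylor_expansion
    (W : Matrix (Fin 2) (Fin 2) ℝ → ℝ)
    (hWcont : Continuous W) (hWnonneg : ∀ F, 0 ≤ W F)
    (U : Set (Matrix (Fin 2) (Fin 2) ℝ)) (hUopen : IsOpen U)
    (hUSO : {R : Matrix (Fin 2) (Fin 2) ℝ | Rᵀ * R = 1 ∧ R.det = 1} ⊆ U)
    (hC3 : ContDiffOn ℝ 3 W U)
    (hframe : ∀ R F : Matrix (Fin 2) (Fin 2) ℝ, Rᵀ * R = 1 → R.det = 1 → W (R * F) = W F)
    (hzero : ∀ F : Matrix (Fin 2) (Fin 2) ℝ, W F = 0 ↔ (Fᵀ * F = 1 ∧ F.det = 1)) :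
    ∃ δ : ℝ, 0 < δ ∧ δ ≤ 1 ∧ ∃ C : ℝ, 0 < C ∧
      ∀ F : Matrix (Fin 2) (Fin 2) ℝ, frobNorm F ≤ δ →
        |W (1 + F) - 1 / 2 * hessQ W (symPart F)| ≤ C * frobNorm F ^ 3 :=
  W_taylor_expansion_aux W hWcont hWnonneg U hUopen hUSO hC3 hframe hzero
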